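/- In every proper 3-coloring f of the coloring lower-bound graph G_{x,y}, each of the four sets A_1, A_2, B_1, B_2 contains at least one node whose color equals f(c_a^0). -/
import Mathlib


/-- Vertices of the coloring lower-bound graph.  The side `s : Bool`
distinguishes Alice (`false`, the `a`'s) from Bob (`true`, the `b`'s), and
`ℓ : Bool` distinguishes index `1` (`false`) from index `2` (`true`).
So `node false false i = a_1^i`, `bar s ℓ i = s̄_ℓ^i`, `dbar s ℓ i = s̿_ℓ^i`,
`f s ℓ h = f_S^h`, `t s ℓ h = t_S^h`, `c false m = c_a^m`, `c true m = c_b^m`. -/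
inductive CVertex (k logk : ℕ) where
  | node (s ℓ : Bool) (i : Fin k)
  | bar (s ℓ : Bool) (i : Fin k)
  | dbar (s ℓ : Bool) (i : Fin k)
  | f (s ℓ : Bool) (h : Fin logk)
  | t (s ℓ : Bool) (h : Fin logk)
  | c (s : Bool) (m : Fin 3)
deriving DecidableEq

/-- The index, among `{0,1,2}`, of the `c`-node attached to the bit-nodes of the
sets indexed by `ℓ` (i.e. `1` for `ℓ = 1` and `2` for `ℓ = 2`). -/
def ownIdx (ℓ : Bool) : Fin 3 := if ℓ then 2 else 1

/-- The "other" index: `2` for `ℓ = 1` and `1` for `ℓ = 2`. -/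
def othIdx (ℓ : Bool) : Fin 3 := if ℓ then 1 else 2

/-- Base relation generating the edges (i)–(x) of the coloring lower-bound graph
`G_{x,y}`. -/
def cRel (k logk : ℕ) (x y : Fin k → Fin k → Bool) (u v : CVertex k logk) : Prop :=
  -- (i) each node s_ℓ^i is adjacent to exactly its bit-nodes bin(s_ℓ^i)
  (∃ (s ℓ : Bool) (i : Fin k) (h : Fin logk), u = CVertex.node s ℓ i ∧
    v = if i.val.testBit h.val then CVertex.t s ℓ h else CVertex.f s ℓ h) ∨
  -- (ii) the 4-cycles on the bit-nodes
  (∃ (ℓ : Bool) (h : Fin logk),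
    (u = CVertex.f false ℓ h ∧ v = CVertex.t false ℓ h) ∨
    (u = CVertex.t false ℓ h ∧ v = CVertex.f true ℓ h) ∨
    (u = CVertex.f true ℓ h ∧ v = CVertex.t true ℓ h) ∨
    (u = CVertex.t true ℓ h ∧ v = CVertex.f false ℓ h)) ∨
  -- (iii) the two triangles on the c-nodes, and c_a^m ~ c_b^m' for m ≠ m'
  (∃ (s : Bool) (m m' : Fin 3), m ≠ m' ∧ u = CVertex.c s m ∧ v = CVertex.c s m') ∨
  (∃ (m m' : Fin 3), m ≠ m' ∧ u = CVertex.c false m ∧ v = CVertex.c true m') ∨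
  -- (iv) the path edges (s_ℓ^i, s̄_ℓ^i), (s̄_ℓ^i, s̿_ℓ^i), (s̿_ℓ^i, s̄_ℓ^{i+1})
  (∃ (s ℓ : Bool) (i : Fin k), u = CVertex.node s ℓ i ∧ v = CVertex.bar s ℓ i) ∨
  (∃ (s ℓ : Bool) (i : Fin k), u = CVertex.bar s ℓ i ∧ v = CVertex.dbar s ℓ i) ∨
  (∃ (s ℓ : Bool) (i : Fin k) (hi : i.val + 1 < k),
    u = CVertex.dbar s ℓ i ∧ v = CVertex.bar s ℓ ⟨i.val + 1, hi⟩) ∨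
  -- (v) c_s^ℓ adjacent to every bit-node of the sets indexed by ℓ
  (∃ (s ℓ : Bool) (h : Fin logk), u = CVertex.c s (ownIdx ℓ) ∧
    (v = CVertex.f s ℓ h ∨ v = CVertex.t s ℓ h)) ∨
  -- (vi)–(ix) c_s^{oth ℓ} ~ s_ℓ^i, c_s^{own ℓ} ~ s̿_ℓ^i,
  --           c_s^{oth ℓ} ~ s̄_ℓ^0 and c_s^{oth ℓ} ~ s̿_ℓ^{k−1}
  (∃ (s ℓ : Bool) (i : Fin k), u = CVertex.c s (othIdx ℓ) ∧ v = CVertex.node s ℓ i) ∨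
  (∃ (s ℓ : Bool) (i : Fin k), u = CVertex.c s (ownIdx ℓ) ∧ v = CVertex.dbar s ℓ i) ∨
  (∃ (s ℓ : Bool) (i : Fin k), i.val = 0 ∧
    u = CVertex.c s (othIdx ℓ) ∧ v = CVertex.bar s ℓ i) ∨
  (∃ (s ℓ : Bool) (i : Fin k), i.val = k - 1 ∧
    u = CVertex.c s (othIdx ℓ) ∧ v = CVertex.dbar s ℓ i) ∨
  -- (x) the input edges
  (∃ i j : Fin k, x i j = false ∧
    u = CVertex.node false false i ∧ v = CVertex.node false true j) ∨
  (∃ i j : Fin k, y i j = false ∧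
    u = CVertex.node true false i ∧ v = CVertex.node true true j)

/-- The coloring lower-bound graph `G_{x,y}`. -/
def cGraph (k logk : ℕ) (x y : Fin k → Fin k → Bool) : SimpleGraph (CVertex k logk) :=
  SimpleGraph.fromRel (cRel k logk x y)

lemma fin3_resolve (a b c x : Fin 3) (hab : a ≠ b) (hac : a ≠ c) (hbc : b ≠ c)
    (hxb : x ≠ b) (hxc : x ≠ c) : x = a := by
  fin_cases a <;> fin_cases b <;> fin_cases c <;> fin_cases x <;> simp_all

/-- in every proper 3-coloring `f` of the coloring lower-bound
graph `G_{x,y}`, each of the four sets `A_1, A_2, B_1, B_2` contains at least one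
node whose color equals `f (c_a^0)`. -/
theorem cGraph_color_c0_exists (k logk : ℕ) (hk : 2 ≤ k) (hpow : k = 2 ^ logk)
    (x y : Fin k → Fin k → Bool)
    (f : (cGraph k logk x y).Coloring (Fin 3)) (s ℓ : Bool) :
    ∃ i : Fin k, f (CVertex.node s ℓ i) = f (CVertex.c false 0) := by

  classical
  have adj : ∀ u v : CVertex k logk, u ≠ v → cRel k logk x y u v → f u ≠ f v := by
    intro u v hne hr
    exact f.valid ((SimpleGraph.fromRel_adj _ u v).mpr ⟨hne, Or.inl hr⟩)
  -- triangle distinctness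
  have tri : ∀ (s' : Bool) (m m' : Fin 3), m ≠ m' →
      f (CVertex.c s' m) ≠ f (CVertex.c s' m') := by
    intro s' m m' hmm
    exact adj _ _ (by simp [hmm]) (Or.inr (Or.inr (Or.inl ⟨s', m, m', hmm, rfl, rfl⟩)))
  have cross : ∀ m' : Fin 3, 0 ≠ m' → f (CVertex.c false 0) ≠ f (CVertex.c true m') := by
    intro m' hm
    exact adj _ _ (by simp) (Or.inr (Or.inr (Or.inr (Or.inl ⟨0, m', hm, rfl, rfl⟩))))
  have hC0eq : f (CVertex.c s 0) = f (CVertex.c false 0) := by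
    cases s
    · rfl
    · exact (fin3_resolve _ _ _ _ (tri true 0 1 (by decide)) (tri true 0 2 (by decide))
        (tri true 1 2 (by decide)) (cross 1 (by decide)) (cross 2 (by decide))).symm
  set C0 := f (CVertex.c s 0) with hC0
  set Cw := f (CVertex.c s (ownIdx ℓ)) with hCw
  set Ct := f (CVertex.c s (othIdx ℓ)) with hCt
  have hw0 : ownIdx ℓ ≠ 0 := by cases ℓ <;> decide
  have ht0 : othIdx ℓ ≠ 0 := by cases ℓ <;> decide
  have hwt : ownIdx ℓ ≠ othIdx ℓ := by cases ℓ <;> decide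
  have h0w : C0 ≠ Cw := tri s 0 _ (Ne.symm hw0)
  have h0t : C0 ≠ Ct := tri s 0 _ (Ne.symm ht0)
  have hwtc : Cw ≠ Ct := tri s _ _ hwt
  by_contra hcon
  push_neg at hcon
  rw [← hC0eq] at hcon
  -- every node s_ℓ^i has color Cw
  have hnode : ∀ i : Fin k, f (CVertex.node s ℓ i) = Cw := by
    intro i
    have h1 : f (CVertex.node s ℓ i) ≠ Ct :=
      Ne.symm (adj _ _ (by simp) (Or.inr (Or.inr (Or.inr (Or.inr (Or.inr (Or.inr (Or.inr
        (Or.inr (Or.inl ⟨s, ℓ, i, rfl, rfl⟩))))))))))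
    exact fin3_resolve Cw C0 Ct _ (Ne.symm h0w) hwtc h0t (hcon i) h1
  -- dbar nodes avoid Cw
  have hdbarw : ∀ i : Fin k, f (CVertex.dbar s ℓ i) ≠ Cw := by
    intro i
    exact Ne.symm (adj _ _ (by simp) (Or.inr (Or.inr (Or.inr (Or.inr (Or.inr (Or.inr (Or.inr
      (Or.inr (Or.inr (Or.inl ⟨s, ℓ, i, rfl, rfl⟩)))))))))))
  -- bar nodes avoid Cw (adjacent to node of color Cw)
  have hbarw : ∀ i : Fin k, f (CVertex.bar s ℓ i) ≠ Cw := by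
    intro i
    have := adj _ _ (by simp) (Or.inr (Or.inr (Or.inr (Or.inr (Or.inl
      ⟨s, ℓ, i, rfl, rfl⟩)))) : cRel k logk x y (CVertex.node s ℓ i) (CVertex.bar s ℓ i))
    rw [hnode i] at this
    exact Ne.symm this
  have key : ∀ n (hn : n < k), f (CVertex.bar s ℓ ⟨n, hn⟩) = C0 ∧
      f (CVertex.dbar s ℓ ⟨n, hn⟩) = Ct := by
    intro n
    induction n with
    | zero =>
      intro hn
      have hb0 : f (CVertex.bar s ℓ ⟨0, hn⟩) ≠ Ct :=
        Ne.symm (adj _ _ (by simp) (Or.inr (Or.inr (Or.inr (Or.inr (Or.inr (Or.inr (Or.inr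
          (Or.inr (Or.inr (Or.inr (Or.inl ⟨s, ℓ, ⟨0, hn⟩, rfl, rfl, rfl⟩))))))))))))
      have hb : f (CVertex.bar s ℓ ⟨0, hn⟩) = C0 :=
        fin3_resolve C0 Cw Ct _ h0w h0t hwtc (hbarw _) hb0
      refine ⟨hb, ?_⟩
      have hd0 : f (CVertex.dbar s ℓ ⟨0, hn⟩) ≠ C0 := by
        have := adj _ _ (by simp) (Or.inr (Or.inr (Or.inr (Or.inr (Or.inr (Or.inl
          ⟨s, ℓ, ⟨0, hn⟩, rfl, rfl⟩)))))
          : cRel k logk x y (CVertex.bar s ℓ ⟨0, hn⟩) (CVertex.dbar s ℓ ⟨0, hn⟩))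
        rw [hb] at this
        exact Ne.symm this
      exact fin3_resolve Ct C0 Cw _ (Ne.symm h0t) (Ne.symm hwtc) h0w hd0 (hdbarw _)
    | succ n ih =>
      intro hn
      have hn' : n < k := Nat.lt_of_succ_lt hn
      obtain ⟨hb, hd⟩ := ih hn'
      have hbS : f (CVertex.bar s ℓ ⟨n + 1, hn⟩) ≠ Ct := by
        have := adj _ _ (by simp) (Or.inr (Or.inr (Or.inr (Or.inr (Or.inr (Or.inr (Or.inl
          ⟨s, ℓ, ⟨n, hn'⟩, hn, rfl, rfl⟩))))))
          : cRel k logk x y (CVertex.dbar s ℓ ⟨n, hn'⟩) (CVertex.bar s ℓ ⟨n + 1, hn⟩))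
        rw [hd] at this
        exact Ne.symm this
      have hbE : f (CVertex.bar s ℓ ⟨n + 1, hn⟩) = C0 :=
        fin3_resolve C0 Cw Ct _ h0w h0t hwtc (hbarw _) hbS
      refine ⟨hbE, ?_⟩
      have hdS : f (CVertex.dbar s ℓ ⟨n + 1, hn⟩) ≠ C0 := by
        have := adj _ _ (by simp) (Or.inr (Or.inr (Or.inr (Or.inr (Or.inr (Or.inl
          ⟨s, ℓ, ⟨n + 1, hn⟩, rfl, rfl⟩)))))
          : cRel k logk x y (CVertex.bar s ℓ ⟨n + 1, hn⟩) (CVertex.dbar s ℓ ⟨n + 1, hn⟩))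
        rw [hbE] at this
        exact Ne.symm this
      exact fin3_resolve Ct C0 Cw _ (Ne.symm h0t) (Ne.symm hwtc) h0w hdS (hdbarw _)
  have hklt : k - 1 < k := Nat.sub_lt (by omega) one_pos
  have hlast := (key (k - 1) hklt).2
  have : f (CVertex.dbar s ℓ ⟨k - 1, hklt⟩) ≠ Ct :=
    Ne.symm (adj _ _ (by simp) (Or.inr (Or.inr (Or.inr (Or.inr (Or.inr (Or.inr (Or.inr
      (Or.inr (Or.inr (Or.inr (Or.inr (Or.inl ⟨s, ℓ, ⟨k - 1, hklt⟩, rfl, rfl, rfl⟩)))))))))))))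
  exact this hlast
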